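/- arXiv:2507.18573 — 2 statements merged into one kernel-verified Lean document; each statement's English description precedes it below -/
import Mathlib

section
/- Let U ⊆ ℝⁿ be an open set that is star-shaped about the origin and invariant under a linear action h of the multiplicative group ℝ^× of nonzero reals (h_z denoting the action of z). Then every closed differential p-form α on U satisfying h_z^*α = z·α for all z ∈ ℝ^× is exact, and admits a primitive β (i.e. dβ = α) which is itself 1-homogeneous: h_z^*β = z·β for all z ∈ ℝ^×. -/
/-! Homogeneous Poincaré Lemma on a star-shaped, ℝˣ-invariant open set U ⊆ ℝⁿ:
every closed 1-homogeneous (p+1)-form is exact with a 1-homogeneous primitive. -/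

abbrev En (n : ℕ) := EuclideanSpace ℝ (Fin n)

/-- Exterior derivative of a `k`-form (evaluated on constant vector fields). -/
noncomputable def extD {E : Type*} [NormedAddCommGroup E] [NormedSpace ℝ E] {k : ℕ}
    (α : E → (Fin k → E) → ℝ) (x : E) (v : Fin (k + 1) → E) : ℝ :=
  ∑ i : Fin (k + 1), (-1 : ℝ) ^ (i : ℕ) *
    fderiv ℝ (fun y => α y (fun j => v (i.succAbove j))) x (v i)

namespace HPL

variable {n : ℕ}

noncomputable def ee (k : Fin n) : En n := EuclideanSpace.single k 1

lemma sum_smul_ee (u : En n) : ∑ k, u k • ee k = u := by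
  ext j
  simp only [ee]
  have : (∑ k, u k • EuclideanSpace.single k (1:ℝ)) j
      = ∑ k, (u k • EuclideanSpace.single k (1:ℝ)) j := by
    rw [WithLp.ofLp_sum]; exact Finset.sum_apply j _ _
  rw [this]
  simp [EuclideanSpace.single_apply]

lemma expand_cons {m : ℕ} (g : AlternatingMap ℝ (En n) ℝ (Fin (m+1))) (u : En n)
    (w : Fin m → En n) :
    g (Fin.cons u w) = ∑ k, u k * g (Fin.cons (ee k) w) := by
  have h1 : ∀ z : En n, Fin.cons z w = Function.update (Fin.cons u w : Fin (m+1) → En n) 0 z := by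
    intro z; funext j
    refine Fin.cases ?_ (fun k => ?_) j <;> simp [Fin.succ_ne_zero]
  conv_lhs => rw [← sum_smul_ee u, h1]
  rw [show g (Function.update (Fin.cons u w : Fin (m+1) → En n) 0 (∑ k, u k • ee k))
      = g.toMultilinearMap (Function.update (Fin.cons u w : Fin (m+1) → En n) 0 (∑ k, u k • ee k)) from rfl,
    g.toMultilinearMap.map_update_sum Finset.univ 0 (fun k => u k • ee k) (Fin.cons u w)]
  congr 1
  ext k
  rw [show g.toMultilinearMap (Function.update (Fin.cons u w : Fin (m+1) → En n) 0 (u k • ee k))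
      = g (Function.update (Fin.cons u w : Fin (m+1) → En n) 0 (u k • ee k)) from rfl,
    g.map_update_smul, ← h1]
  simp

lemma cons_eq_comp_perm {m : ℕ} (v : Fin (m+1) → En n) (i : Fin (m+1)) :
    Fin.cons (v i) (v ∘ i.succAbove) = v ∘ ⇑(i.cycleRange)⁻¹ := by
  funext j
  refine Fin.cases ?_ (fun k => ?_) j
  · have h0 : (i.cycleRange)⁻¹ 0 = i := by
      rw [Equiv.Perm.inv_eq_iff_eq]; exact (Fin.cycleRange_self i).symm
    simp [h0]
  · have hs : (i.cycleRange)⁻¹ k.succ = i.succAbove k := by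
      rw [Equiv.Perm.inv_eq_iff_eq]; exact (Fin.cycleRange_succAbove i k).symm
    simp [hs]

lemma alt_sum {m : ℕ} (g : AlternatingMap ℝ (En n) ℝ (Fin (m+1))) (v : Fin (m+1) → En n) :
    ∑ i : Fin (m+1), (-1:ℝ)^(i:ℕ) * g (Fin.cons (v i) (v ∘ i.succAbove)) = (m+1 : ℝ) * g v := by
  have key : ∀ i : Fin (m+1), (-1:ℝ)^(i:ℕ) * g (Fin.cons (v i) (v ∘ i.succAbove)) = g v := by
    intro i
    rw [cons_eq_comp_perm, g.map_perm v (i.cycleRange)⁻¹]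
    have hsign : Equiv.Perm.sign (i.cycleRange)⁻¹ = (-1 : ℤˣ)^(i:ℕ) := by
      rw [map_inv, Fin.sign_cycleRange]; simp
    rw [hsign]
    have : ((-1 : ℤˣ)^(i:ℕ) • g v) = (-1:ℝ)^(i:ℕ) * g v := by
      simp [Units.smul_def, zsmul_eq_mul]
    rw [this, ← mul_assoc, ← mul_pow]
    simp
  rw [Finset.sum_congr rfl (fun i _ => key i)]
  simp [Finset.card_univ, mul_comm]

section Param

variable {n : ℕ}

lemma mem_thick {O : Set (ℝ × En n)} (hO : IsOpen O) {x₀ : En n}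
    (hx : ∀ t ∈ Set.Icc (0:ℝ) 1, (t, x₀) ∈ O) :
    ∃ ε > 0, ∀ t ∈ Set.Icc (0:ℝ) 1, ∀ y ∈ Metric.closedBall x₀ ε, (t, y) ∈ O := by
  have hK : IsCompact ((Set.Icc (0:ℝ) 1) ×ˢ ({x₀} : Set (En n))) :=
    isCompact_Icc.prod isCompact_singleton
  have hKO : (Set.Icc (0:ℝ) 1) ×ˢ ({x₀} : Set (En n)) ⊆ O := by
    rintro ⟨t, y⟩ ⟨ht, hy⟩
    rcases hy with rfl
    exact hx t ht
  obtain ⟨δ, δpos, hδ⟩ := hK.exists_thickening_subset_open hO hKO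
  refine ⟨δ/2, by positivity, fun t ht y hy => ?_⟩
  apply hδ
  rw [Metric.mem_thickening_iff]
  refine ⟨(t, x₀), ⟨ht, rfl⟩, ?_⟩
  have : dist ((t,y) : ℝ × En n) (t, x₀) = dist y x₀ := by
    rw [Prod.dist_eq]; simp [dist_nonneg]
  rw [this]
  calc dist y x₀ ≤ δ/2 := hy
  _ < δ := by linarith

lemma param_hasFDerivAt {F : Type} [NormedAddCommGroup F] [NormedSpace ℝ F] [CompleteSpace F]
    {O : Set (ℝ × En n)} (hO : IsOpen O)
    {f : ℝ × En n → F} {f' : ℝ × En n → En n →L[ℝ] F}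
    (hf : ContinuousOn f O) (hf' : ContinuousOn f' O)
    (hder : ∀ q ∈ O, HasFDerivAt (fun y => f (q.1, y)) (f' q) q.2)
    {x₀ : En n} (hx : ∀ t ∈ Set.Icc (0:ℝ) 1, (t, x₀) ∈ O) :
    HasFDerivAt (fun y => ∫ t in (0:ℝ)..1, f (t, y)) (∫ t in (0:ℝ)..1, f' (t, x₀)) x₀ := by
  obtain ⟨ε, εpos, hball⟩ := mem_thick hO hx
  have hK' : IsCompact ((Set.Icc (0:ℝ) 1) ×ˢ Metric.closedBall x₀ ε) :=
    isCompact_Icc.prod (isCompact_closedBall _ _)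
  have hK'O : (Set.Icc (0:ℝ) 1) ×ˢ Metric.closedBall x₀ ε ⊆ O := by
    rintro ⟨t, y⟩ ⟨ht, hy⟩; exact hball t ht y hy
  obtain ⟨C, hC⟩ := hK'.exists_bound_of_continuousOn (hf'.mono hK'O)
  have hIoc : Set.uIoc (0:ℝ) 1 ⊆ Set.Icc (0:ℝ) 1 := by
    rw [Set.uIoc_of_le zero_le_one]; exact Set.Ioc_subset_Icc_self
  have hIcc : Set.uIcc (0:ℝ) 1 = Set.Icc (0:ℝ) 1 := Set.uIcc_of_le zero_le_one
  haveI : SecondCountableTopologyEither ℝ (En n →L[ℝ] F) :=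
    secondCountableTopologyEither_of_left ℝ _
  have contf : ∀ y ∈ Metric.closedBall x₀ ε, ContinuousOn (fun t => f (t, y)) (Set.Icc (0:ℝ) 1) := by
    intro y hy
    exact hf.comp (Continuous.continuousOn (by fun_prop)) (fun t ht => hball t ht y hy)
  have contf' : ContinuousOn (fun t => f' (t, x₀)) (Set.Icc (0:ℝ) 1) :=
    hf'.comp (Continuous.continuousOn (by fun_prop))
      (fun t ht => hball t ht x₀ (Metric.mem_closedBall_self εpos.le))
  exact intervalIntegral.hasFDerivAt_integral_of_dominated_of_fderiv_le
    (F := fun y t => f (t, y)) (F' := fun y t => f' (t, y)) (bound := fun _ => C) (Metric.ball_mem_nhds x₀ εpos)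
    (Filter.eventually_of_mem (Metric.ball_mem_nhds x₀ εpos) (fun y hy =>
      ((contf y (Metric.ball_subset_closedBall hy)).mono hIoc).aestronglyMeasurable
        measurableSet_uIoc))
    ((show ContinuousOn (fun t => f (t, x₀)) (Set.uIcc (0:ℝ) 1) from
      hIcc ▸ contf x₀ (Metric.mem_closedBall_self εpos.le)).intervalIntegrable)
    ((contf'.mono hIoc).aestronglyMeasurable measurableSet_uIoc)
    (Filter.Eventually.of_forall (fun t ht y hy =>
      hC (t, y) ⟨hIoc ht, Metric.ball_subset_closedBall hy⟩))
    intervalIntegrable_const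
    (Filter.Eventually.of_forall (fun t ht y hy =>
      hder (t, y) (hball t (hIoc ht) y (Metric.ball_subset_closedBall hy))))

lemma param_contDiffOn : ∀ (m : ℕ) {F : Type} [NormedAddCommGroup F] [NormedSpace ℝ F]
    [CompleteSpace F] {O : Set (ℝ × En n)}, IsOpen O → ∀ (f : ℝ × En n → F),
    ContDiffOn ℝ (⊤:ℕ∞) f O → ∀ {V : Set (En n)}, IsOpen V →
    (∀ t ∈ Set.Icc (0:ℝ) 1, ∀ y ∈ V, (t, y) ∈ O) →
    ContDiffOn ℝ m (fun y => ∫ t in (0:ℝ)..1, f (t, y)) V := by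
  intro m
  induction m with
  | zero =>
    intro F _ _ _ O hO f hf V hV hVO
    rw [show ((0:ℕ) : WithTop ℕ∞) = 0 from rfl, contDiffOn_zero]
    intro y hy
    set f' : ℝ × En n → En n →L[ℝ] F :=
      fun q => (fderiv ℝ f q).comp (ContinuousLinearMap.inr ℝ ℝ (En n)) with hf'def
    have hf'cd : ContDiffOn ℝ (⊤:ℕ∞) f' O := by
      have h1 : ContDiffOn ℝ (⊤:ℕ∞) (fderiv ℝ f) O :=
        hf.fderiv_of_isOpen hO (le_of_eq rfl)
      exact (((ContinuousLinearMap.compL ℝ (En n) (ℝ × En n) F).flip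
        (ContinuousLinearMap.inr ℝ ℝ (En n))).contDiff.comp_contDiffOn h1)
    have hder : ∀ q ∈ O, HasFDerivAt (fun y => f (q.1, y)) (f' q) q.2 := by
      intro q hq
      have hd : DifferentiableAt ℝ f q :=
        (hf.differentiableOn (by simp)).differentiableAt (hO.mem_nhds hq)
      have := hd.hasFDerivAt.comp q.2 (f := fun y : En n => (q.1, y)) (hasFDerivAt_prodMk_right q.1 q.2)
      exact this
    exact ((param_hasFDerivAt hO hf.continuousOn hf'cd.continuousOn hder
      (fun t ht => hVO t ht y hy)).continuousAt).continuousWithinAt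
  | succ m ih =>
    intro F _ _ _ O hO f hf V hV hVO
    set f' : ℝ × En n → En n →L[ℝ] F :=
      fun q => (fderiv ℝ f q).comp (ContinuousLinearMap.inr ℝ ℝ (En n)) with hf'def
    have hf'cd : ContDiffOn ℝ (⊤:ℕ∞) f' O := by
      have h1 : ContDiffOn ℝ (⊤:ℕ∞) (fderiv ℝ f) O :=
        hf.fderiv_of_isOpen hO (le_of_eq rfl)
      exact (((ContinuousLinearMap.compL ℝ (En n) (ℝ × En n) F).flip
        (ContinuousLinearMap.inr ℝ ℝ (En n))).contDiff.comp_contDiffOn h1)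
    have hder : ∀ q ∈ O, HasFDerivAt (fun y => f (q.1, y)) (f' q) q.2 := by
      intro q hq
      have hd : DifferentiableAt ℝ f q :=
        (hf.differentiableOn (by simp)).differentiableAt (hO.mem_nhds hq)
      have := hd.hasFDerivAt.comp q.2 (f := fun y : En n => (q.1, y)) (hasFDerivAt_prodMk_right q.1 q.2)
      exact this
    have hkey : ∀ y ∈ V, HasFDerivAt (fun y => ∫ t in (0:ℝ)..1, f (t, y))
        (∫ t in (0:ℝ)..1, f' (t, y)) y := by
      intro y hy
      exact param_hasFDerivAt hO hf.continuousOn hf'cd.continuousOn hder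
        (fun t ht => hVO t ht y hy)
    have hcast : ((m+1:ℕ) : WithTop ℕ∞) = (m : WithTop ℕ∞) + 1 := by push_cast; ring
    rw [hcast, contDiffOn_succ_iff_fderiv_of_isOpen hV]
    refine ⟨fun y hy => ((hkey y hy).differentiableAt).differentiableWithinAt, by simp, ?_⟩
    exact (ih hO f' hf'cd hV hVO).congr
      (fun y hy => ((hkey y hy).fderiv))

end Param

section Beta

variable {n : ℕ}

def Sset (U : Set (En n)) : Set (ℝ × En n) := (fun q : ℝ × En n => q.1 • q.2) ⁻¹' U

lemma isOpen_Sset {U : Set (En n)} (hU : IsOpen U) : IsOpen (Sset U) :=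
  hU.preimage (continuous_fst.smul continuous_snd)

lemma mem_Sset {U : Set (En n)} (hUstar : StarConvex ℝ (0 : En n) U) {t : ℝ}
    (ht : t ∈ Set.Icc (0:ℝ) 1) {y : En n} (hy : y ∈ U) : (t, y) ∈ Sset U :=
  hUstar.smul_mem hy ht.1 ht.2

lemma joint_smooth {m : ℕ} {U : Set (En n)} (α : En n → AlternatingMap ℝ (En n) ℝ (Fin (m+1)))
    (hsm : ∀ w : Fin (m+1) → En n, ContDiffOn ℝ (⊤:ℕ∞) (fun y => α y w) U)
    (w : Fin m → En n) :
    ContDiffOn ℝ (⊤:ℕ∞) (fun q : ℝ × En n => α (q.1 • q.2) (Fin.cons q.2 w)) (Sset U) := by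
  have : (fun q : ℝ × En n => α (q.1 • q.2) (Fin.cons q.2 w))
      = fun q : ℝ × En n => ∑ k, q.2 k * α (q.1 • q.2) (Fin.cons (HPL.ee k) w) := by
    funext q; exact HPL.expand_cons (α (q.1 • q.2)) q.2 w
  rw [this]
  apply ContDiffOn.sum
  intro k _
  have h1 : ContDiffOn ℝ (⊤:ℕ∞) (fun q : ℝ × En n => q.2 k) (Sset U) := by
    have := ((EuclideanSpace.proj (𝕜 := ℝ) k).contDiff.comp
      (contDiff_snd : ContDiff ℝ (⊤:ℕ∞) (Prod.snd : ℝ × En n → En n)))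
    exact this.contDiffOn
  have h2 : ContDiffOn ℝ (⊤:ℕ∞)
      (fun q : ℝ × En n => α (q.1 • q.2) (Fin.cons (HPL.ee k) w)) (Sset U) :=
    (hsm (Fin.cons (HPL.ee k) w)).comp
      ((contDiff_fst.smul contDiff_snd)).contDiffOn (fun q hq => hq)
  exact h1.mul h2

lemma joint_smooth_f {p : ℕ} {U : Set (En n)} (α : En n → AlternatingMap ℝ (En n) ℝ (Fin (p+1)))
    (hsm : ∀ w : Fin (p+1) → En n, ContDiffOn ℝ (⊤:ℕ∞) (fun y => α y w) U)
    (w : Fin p → En n) :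
    ContDiffOn ℝ (⊤:ℕ∞) (fun q : ℝ × En n => q.1 ^ p * α (q.1 • q.2) (Fin.cons q.2 w))
      (Sset U) := by
  have h1 : ContDiff ℝ (⊤:ℕ∞) (fun q : ℝ × En n => q.1 ^ p) := by fun_prop
  exact h1.contDiffOn.mul (joint_smooth α hsm w)

lemma integrable_aux {p : ℕ} {U : Set (En n)} (hUopen : IsOpen U)
    (hUstar : StarConvex ℝ (0 : En n) U)
    (α : En n → AlternatingMap ℝ (En n) ℝ (Fin (p+1)))
    (hsm : ∀ w : Fin (p+1) → En n, ContDiffOn ℝ (⊤:ℕ∞) (fun y => α y w) U)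
    {y : En n} (hy : y ∈ U) (w : Fin p → En n) :
    IntervalIntegrable (fun t : ℝ => t ^ p * α (t • y) (Fin.cons y w)) MeasureTheory.volume 0 1 := by
  apply ContinuousOn.intervalIntegrable
  rw [Set.uIcc_of_le zero_le_one]
  exact ((joint_smooth_f α hsm w).continuousOn).comp
    (Continuous.continuousOn (by fun_prop))
    (fun t ht => mem_Sset hUstar ht hy)

lemma cons_update' {m : ℕ} (y : En n) (w : Fin m → En n) (i : Fin m) (x : En n) :
    (Fin.cons y (Function.update w i x) : Fin (m+1) → En n)
      = Function.update (Fin.cons y w : Fin (m+1) → En n) i.succ x := by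
  funext j
  refine Fin.cases ?_ (fun k => ?_) j
  · rw [Function.update_of_ne (Fin.succ_ne_zero i).symm]
    simp
  · simp only [Fin.cons_succ, Function.update_apply, Fin.succ_inj]

open Classical in
noncomputable def beta {p : ℕ} {U : Set (En n)} (hUopen : IsOpen U)
    (hUstar : StarConvex ℝ (0 : En n) U)
    (α : En n → AlternatingMap ℝ (En n) ℝ (Fin (p+1)))
    (hsm : ∀ w : Fin (p+1) → En n, ContDiffOn ℝ (⊤:ℕ∞) (fun y => α y w) U)
    (y : En n) : AlternatingMap ℝ (En n) ℝ (Fin p) :=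
  if hy : y ∈ U then
    { toFun := fun w => ∫ t in (0:ℝ)..1, t ^ p * α (t • y) (Fin.cons y w)
      map_update_add' := by
        intro inst w i a b
        have hi : inst = instDecidableEqFin p := Subsingleton.elim _ _
        subst hi
        have key : ∀ x : En n,
            (Fin.cons y (Function.update w i x) : Fin (p+1) → En n)
              = Function.update (Fin.cons y w : Fin (p+1) → En n) i.succ x :=
          fun x => cons_update' y w i x
        simp only [key]
        have : ∀ t : ℝ, t ^ p * α (t • y) (Function.update (Fin.cons y w) i.succ (a + b))
            = t ^ p * α (t • y) (Function.update (Fin.cons y w) i.succ a)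
              + t ^ p * α (t • y) (Function.update (Fin.cons y w) i.succ b) := by
          intro t; rw [AlternatingMap.map_update_add]; ring
        simp only [this]
        apply intervalIntegral.integral_add
        · have := integrable_aux hUopen hUstar α hsm hy (Function.update w i a)
          simpa only [key] using this
        · have := integrable_aux hUopen hUstar α hsm hy (Function.update w i b)
          simpa only [key] using this
      map_update_smul' := by
        intro inst w i c a
        have hi : inst = instDecidableEqFin p := Subsingleton.elim _ _
        subst hi
        have key : ∀ x : En n,
            (Fin.cons y (Function.update w i x) : Fin (p+1) → En n)
              = Function.update (Fin.cons y w : Fin (p+1) → En n) i.succ x :=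
          fun x => cons_update' y w i x
        simp only [key]
        have : ∀ t : ℝ, t ^ p * α (t • y) (Function.update (Fin.cons y w) i.succ (c • a))
            = c * (t ^ p * α (t • y) (Function.update (Fin.cons y w) i.succ a)) := by
          intro t; rw [AlternatingMap.map_update_smul]; simp; ring
        simp only [this]
        rw [intervalIntegral.integral_const_mul]
        simp [smul_eq_mul]
      map_eq_zero_of_eq' := by
        intro w i j hij hne
        have : ∀ t : ℝ, t ^ p * α (t • y) (Fin.cons y w) = 0 := by
          intro t
          rw [AlternatingMap.map_eq_zero_of_eq (α (t • y)) (Fin.cons y w)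
            (i := i.succ) (j := j.succ) (by simpa using hij) (by simpa using hne)]
          ring
        simp only [this, intervalIntegral.integral_zero] }
  else 0

lemma beta_apply {p : ℕ} {U : Set (En n)} (hUopen : IsOpen U)
    (hUstar : StarConvex ℝ (0 : En n) U)
    (α : En n → AlternatingMap ℝ (En n) ℝ (Fin (p+1)))
    (hsm : ∀ w : Fin (p+1) → En n, ContDiffOn ℝ (⊤:ℕ∞) (fun y => α y w) U)
    {y : En n} (hy : y ∈ U) (w : Fin p → En n) :
    beta hUopen hUstar α hsm y w = ∫ t in (0:ℝ)..1, t ^ p * α (t • y) (Fin.cons y w) := by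
  simp only [beta, dif_pos hy]
  rfl

end Beta

section Deriv

variable {n p : ℕ} {U : Set (En n)}

/-- coefficient functions -/
noncomputable def aA (α : En n → AlternatingMap ℝ (En n) ℝ (Fin (p+1))) (k : Fin n)
    (w : Fin p → En n) : En n → ℝ := fun y => α y (Fin.cons (HPL.ee k) w)

noncomputable def fP (α : En n → AlternatingMap ℝ (En n) ℝ (Fin (p+1))) (w : Fin p → En n) :
    ℝ × En n → ℝ := fun q => q.1 ^ p * α (q.1 • q.2) (Fin.cons q.2 w)

noncomputable def fP' (α : En n → AlternatingMap ℝ (En n) ℝ (Fin (p+1))) (w : Fin p → En n) :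
    ℝ × En n → (En n →L[ℝ] ℝ) := fun q => q.1 ^ p •
  (∑ k, (q.2 k • (q.1 • fderiv ℝ (aA α k w) (q.1 • q.2))
    + (aA α k w (q.1 • q.2)) • (EuclideanSpace.proj k : En n →L[ℝ] ℝ)))

lemma contOn_fP (hUopen : IsOpen U) (α : En n → AlternatingMap ℝ (En n) ℝ (Fin (p+1)))
    (hsm : ∀ w : Fin (p+1) → En n, ContDiffOn ℝ (⊤:ℕ∞) (fun y => α y w) U)
    (w : Fin p → En n) : ContinuousOn (fP α w) (Sset U) :=
  (joint_smooth_f α hsm w).continuousOn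

lemma contOn_fP' (hUopen : IsOpen U) (α : En n → AlternatingMap ℝ (En n) ℝ (Fin (p+1)))
    (hsm : ∀ w : Fin (p+1) → En n, ContDiffOn ℝ (⊤:ℕ∞) (fun y => α y w) U)
    (w : Fin p → En n) : ContinuousOn (fP' α w) (Sset U) := by
  apply ContinuousOn.smul ((continuous_fst.pow p).continuousOn)
  apply continuousOn_finset_sum
  intro k _
  have hsmul : Continuous (fun q : ℝ × En n => q.1 • q.2) := continuous_fst.smul continuous_snd
  have hD : ContinuousOn (fun q : ℝ × En n => fderiv ℝ (aA α k w) (q.1 • q.2)) (Sset U) :=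
    ((hsm (Fin.cons (HPL.ee k) w)).continuousOn_fderiv_of_isOpen hUopen
      (by exact_mod_cast le_top)).comp hsmul.continuousOn (fun q hq => hq)
  have ha : ContinuousOn (fun q : ℝ × En n => aA α k w (q.1 • q.2)) (Sset U) :=
    ((hsm (Fin.cons (HPL.ee k) w)).continuousOn).comp hsmul.continuousOn (fun q hq => hq)
  have h2k : Continuous (fun q : ℝ × En n => q.2 k) :=
    (EuclideanSpace.proj (𝕜 := ℝ) k).continuous.comp continuous_snd
  exact (h2k.continuousOn.smul (continuous_fst.continuousOn.smul hD)).add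
    (ha.smul continuousOn_const)

lemma hasFDerivAt_fP (hUopen : IsOpen U) (α : En n → AlternatingMap ℝ (En n) ℝ (Fin (p+1)))
    (hsm : ∀ w : Fin (p+1) → En n, ContDiffOn ℝ (⊤:ℕ∞) (fun y => α y w) U)
    (w : Fin p → En n) :
    ∀ q ∈ Sset U, HasFDerivAt (fun y => fP α w (q.1, y)) (fP' α w q) q.2 := by
  rintro ⟨t, y⟩ hq
  have hq' : t • y ∈ U := hq
  have hterm : ∀ k : Fin n, HasFDerivAt (fun y' : En n => y' k * aA α k w (t • y'))
      (y k • (t • fderiv ℝ (aA α k w) (t • y))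
        + (aA α k w (t • y)) • (EuclideanSpace.proj k : En n →L[ℝ] ℝ)) y := by
    intro k
    have h1 : HasFDerivAt (fun y' : En n => y' k)
        (EuclideanSpace.proj k : En n →L[ℝ] ℝ) y :=
      (EuclideanSpace.proj k : En n →L[ℝ] ℝ).hasFDerivAt
    have hsmul : HasFDerivAt (fun y' : En n => t • y')
        (t • ContinuousLinearMap.id ℝ (En n)) y := by
      have := (t • ContinuousLinearMap.id ℝ (En n)).hasFDerivAt (x := y)
      exact this
    have hdiff : DifferentiableAt ℝ (aA α k w) (t • y) :=
      ((hsm _).differentiableOn (by simp)).differentiableAt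
        (hUopen.mem_nhds hq')
    have h2 : HasFDerivAt (fun y' : En n => aA α k w (t • y'))
        (t • fderiv ℝ (aA α k w) (t • y)) y := by
      have hcomp := (hdiff.hasFDerivAt).comp y hsmul
      have heq : (fderiv ℝ (aA α k w) (t • y)).comp (t • ContinuousLinearMap.id ℝ (En n))
          = t • fderiv ℝ (aA α k w) (t • y) := by
        ext u; simp
      rwa [heq] at hcomp
    exact h1.mul h2
  have hsum : HasFDerivAt (fun y' : En n => ∑ k, y' k * aA α k w (t • y'))
      (∑ k, (y k • (t • fderiv ℝ (aA α k w) (t • y))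
        + (aA α k w (t • y)) • (EuclideanSpace.proj k : En n →L[ℝ] ℝ))) y :=
    HasFDerivAt.fun_sum (fun k _ => hterm k)
  have hfun : (fun y' : En n => fP α w (t, y'))
      = fun y' : En n => t ^ p * ∑ k, y' k * aA α k w (t • y') := by
    funext y'
    simp only [fP, aA]
    rw [HPL.expand_cons (α (t • y')) y' w]
  rw [hfun]
  exact hsum.const_mul (t ^ p)

lemma R2 (hUopen : IsOpen U) (α : En n → AlternatingMap ℝ (En n) ℝ (Fin (p+1)))
    (hsm : ∀ w : Fin (p+1) → En n, ContDiffOn ℝ (⊤:ℕ∞) (fun y => α y w) U)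
    {z : En n} (hz : z ∈ U) (x : En n) (w : Fin p → En n) :
    HasFDerivAt (fun y => α y (Fin.cons x w)) (∑ k, x k • fderiv ℝ (aA α k w) z) z := by
  have heq : (fun y => α y (Fin.cons x w)) = fun y => ∑ k, x k * aA α k w y :=
    funext fun y => HPL.expand_cons (α y) x w
  rw [heq]
  apply HasFDerivAt.fun_sum
  intro k _
  exact (((((hsm _).differentiableOn (by simp)).differentiableAt
    (hUopen.mem_nhds hz)).hasFDerivAt).const_mul (x k))

end Deriv

section BetaProps

variable {n p : ℕ} {U : Set (En n)}

lemma beta_smooth (hUopen : IsOpen U) (hUstar : StarConvex ℝ (0 : En n) U)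
    (α : En n → AlternatingMap ℝ (En n) ℝ (Fin (p+1)))
    (hsm : ∀ w : Fin (p+1) → En n, ContDiffOn ℝ (⊤:ℕ∞) (fun y => α y w) U)
    (w : Fin p → En n) :
    ContDiffOn ℝ (⊤:ℕ∞) (fun y => beta hUopen hUstar α hsm y w) U := by
  have : ∀ m : ℕ, ContDiffOn ℝ m (fun y => beta hUopen hUstar α hsm y w) U := by
    intro m
    exact (param_contDiffOn m (isOpen_Sset hUopen) (fP α w) (joint_smooth_f α hsm w)
      hUopen (fun t ht y hy => mem_Sset hUstar ht hy)).congr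
      (fun y hy => beta_apply hUopen hUstar α hsm hy w)
  exact contDiffOn_infty.mpr this

lemma beta_hom (hUopen : IsOpen U) (hUstar : StarConvex ℝ (0 : En n) U)
    (α : En n → AlternatingMap ℝ (En n) ℝ (Fin (p+1)))
    (hsm : ∀ w : Fin (p+1) → En n, ContDiffOn ℝ (⊤:ℕ∞) (fun y => α y w) U)
    (h : ℝˣ → En n →L[ℝ] En n) (hUinv : ∀ z : ℝˣ, ∀ x ∈ U, h z x ∈ U)
    (hα_hom : ∀ z : ℝˣ, ∀ x ∈ U, ∀ v : Fin (p + 1) → En n,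
      α (h z x) (fun i => h z (v i)) = (z : ℝ) * α x v)
    (z : ℝˣ) {x : En n} (hx : x ∈ U) (v : Fin p → En n) :
    beta hUopen hUstar α hsm (h z x) (fun i => h z (v i))
      = (z : ℝ) * beta hUopen hUstar α hsm x v := by
  rw [beta_apply hUopen hUstar α hsm (hUinv z x hx), beta_apply hUopen hUstar α hsm hx v,
    ← intervalIntegral.integral_const_mul]
  apply intervalIntegral.integral_congr
  intro t ht
  rw [Set.uIcc_of_le zero_le_one] at ht
  have hmem : t • x ∈ U := hUstar.smul_mem hx ht.1 ht.2
  have hcons : (Fin.cons (h z x) (fun i => h z (v i)) : Fin (p+1) → En n)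
      = fun i => h z ((Fin.cons x v : Fin (p+1) → En n) i) := by
    funext j
    refine Fin.cases ?_ (fun k => ?_) j <;> simp
  calc t ^ p * α (t • h z x) (Fin.cons (h z x) fun i => h z (v i))
      = t ^ p * α (h z (t • x)) (fun i => h z ((Fin.cons x v : Fin (p+1) → En n) i)) := by
        rw [hcons, ((h z).map_smul t x).symm]
    _ = t ^ p * ((z:ℝ) * α (t • x) (Fin.cons x v)) := by rw [hα_hom z (t • x) hmem]
    _ = (z:ℝ) * (t ^ p * α (t • x) (Fin.cons x v)) := by ring

end BetaProps

section Main

variable {n p : ℕ} {U : Set (En n)}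

lemma closed_rearrange (hUopen : IsOpen U)
    (α : En n → AlternatingMap ℝ (En n) ℝ (Fin (p+1)))
    (hα_closed : ∀ x ∈ U, ∀ v : Fin (p + 2) → En n, extD (fun y w => α y w) x v = 0)
    {z : En n} (hz : z ∈ U) (x : En n) (v : Fin (p+1) → En n) :
    fderiv ℝ (fun y => α y v) z x
      = ∑ i : Fin (p+1), (-1:ℝ)^(i:ℕ)
          * fderiv ℝ (fun y => α y (Fin.cons x (fun j => v (i.succAbove j)))) z (v i) := by
  have hcl := hα_closed z hz (Fin.cons x v)
  unfold extD at hcl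
  rw [Fin.sum_univ_succ] at hcl
  have h0fun : (fun j => (Fin.cons x v : Fin (p+2) → En n) ((0 : Fin (p+2)).succAbove j)) = v := by
    funext j; simp [Fin.succAbove_zero]
  have hsfun : ∀ i : Fin (p+1),
      (fun j => (Fin.cons x v : Fin (p+2) → En n) ((Fin.succ i).succAbove j))
        = (Fin.cons x (fun j => v (i.succAbove j)) : Fin (p+1) → En n) := by
    intro i; funext j
    refine Fin.cases ?_ (fun k => ?_) j
    · simp
    · simp [Fin.succ_succAbove_succ]
  rw [h0fun] at hcl
  simp only [Fin.val_zero, pow_zero, one_mul, Fin.cons_zero, Fin.cons_succ, Fin.val_succ] at hcl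
  have hcl2 : (0:ℝ) = fderiv ℝ (fun y => α y v) z x
      + ∑ i : Fin (p+1), -((-1:ℝ)^(i:ℕ)
          * fderiv ℝ (fun y => α y (Fin.cons x (fun j => v (i.succAbove j)))) z (v i)) := by
    rw [← hcl]
    congr 1
    apply Finset.sum_congr rfl
    intro i _
    rw [hsfun i]
    ring
  rw [Finset.sum_neg_distrib] at hcl2
  linarith

lemma beta_primitive (hUopen : IsOpen U) (hUstar : StarConvex ℝ (0 : En n) U)
    (α : En n → AlternatingMap ℝ (En n) ℝ (Fin (p+1)))
    (hsm : ∀ w : Fin (p+1) → En n, ContDiffOn ℝ (⊤:ℕ∞) (fun y => α y w) U)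
    (hα_closed : ∀ x ∈ U, ∀ v : Fin (p + 2) → En n, extD (fun y w => α y w) x v = 0)
    {x : En n} (hx : x ∈ U) (v : Fin (p+1) → En n) :
    extD (fun y w => beta hUopen hUstar α hsm y w) x v = α x v := by
  set w : Fin (p+1) → Fin p → En n := fun i j => v (i.succAbove j) with hwdef
  -- the derivative of each coefficient of β
  have hkey : ∀ i : Fin (p+1), HasFDerivAt (fun y => beta hUopen hUstar α hsm y (w i))
      (∫ t in (0:ℝ)..1, fP' α (w i) (t, x)) x := by
    intro i
    have hint := param_hasFDerivAt (isOpen_Sset hUopen) (contOn_fP hUopen α hsm (w i))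
      (contOn_fP' hUopen α hsm (w i)) (hasFDerivAt_fP hUopen α hsm (w i))
      (fun t ht => mem_Sset hUstar ht hx)
    apply HasFDerivAt.congr_of_eventuallyEq hint
    filter_upwards [hUopen.mem_nhds hx] with y hy
    exact beta_apply hUopen hUstar α hsm hy (w i)
  have hIccmap : ∀ t ∈ Set.Icc (0:ℝ) 1, (t, x) ∈ Sset U := fun t ht => mem_Sset hUstar ht hx
  have hcont' : ∀ i : Fin (p+1),
      ContinuousOn (fun t : ℝ => fP' α (w i) (t, x)) (Set.Icc (0:ℝ) 1) := by
    intro i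
    exact (contOn_fP' hUopen α hsm (w i)).comp
      (Continuous.continuousOn (by fun_prop)) hIccmap
  have hInt' : ∀ i : Fin (p+1),
      IntervalIntegrable (fun t : ℝ => fP' α (w i) (t, x)) MeasureTheory.volume 0 1 := by
    intro i
    apply ContinuousOn.intervalIntegrable
    rw [Set.uIcc_of_le zero_le_one]; exact hcont' i
  have hInt'' : ∀ i : Fin (p+1),
      IntervalIntegrable (fun t : ℝ => (-1:ℝ)^(i:ℕ) * fP' α (w i) (t, x) (v i))
        MeasureTheory.volume 0 1 := by
    intro i
    apply ContinuousOn.intervalIntegrable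
    rw [Set.uIcc_of_le zero_le_one]
    exact continuousOn_const.mul ((hcont' i).clm_apply continuousOn_const)
  -- unfold extD
  have hunf : extD (fun y w => beta hUopen hUstar α hsm y w) x v
      = ∑ i : Fin (p+1), (-1:ℝ)^(i:ℕ)
          * fderiv ℝ (fun y => beta hUopen hUstar α hsm y (w i)) x (v i) := rfl
  rw [hunf]
  have hfd : ∀ i : Fin (p+1), fderiv ℝ (fun y => beta hUopen hUstar α hsm y (w i)) x (v i)
      = ∫ t in (0:ℝ)..1, fP' α (w i) (t, x) (v i) := by
    intro i
    rw [(hkey i).fderiv]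
    exact ContinuousLinearMap.intervalIntegral_apply (hInt' i) (v i)
  calc (∑ i : Fin (p+1), (-1:ℝ)^(i:ℕ)
          * fderiv ℝ (fun y => beta hUopen hUstar α hsm y (w i)) x (v i))
      = ∑ i : Fin (p+1), ∫ t in (0:ℝ)..1, (-1:ℝ)^(i:ℕ) * fP' α (w i) (t, x) (v i) := by
        apply Finset.sum_congr rfl
        intro i _
        rw [hfd i, ← intervalIntegral.integral_const_mul]
    _ = ∫ t in (0:ℝ)..1, ∑ i : Fin (p+1), (-1:ℝ)^(i:ℕ) * fP' α (w i) (t, x) (v i) := by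
        rw [intervalIntegral.integral_finset_sum (fun i _ => hInt'' i)]
    _ = α x v := ?_
  -- FTC
  have hderiv : ∀ t ∈ Set.uIcc (0:ℝ) 1, HasDerivAt (fun s : ℝ => s^(p+1) * α (s • x) v)
      (∑ i : Fin (p+1), (-1:ℝ)^(i:ℕ) * fP' α (w i) (t, x) (v i)) t := by
    intro t ht
    rw [Set.uIcc_of_le zero_le_one] at ht
    have hmem : t • x ∈ U := hUstar.smul_mem hx ht.1 ht.2
    have hdiffv : DifferentiableAt ℝ (fun y => α y v) (t • x) :=
      ((hsm v).differentiableOn (by simp)).differentiableAt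
        (hUopen.mem_nhds hmem)
    have hray : HasDerivAt (fun s : ℝ => s • x) x t := by
      simpa using (hasDerivAt_id t).smul_const x
    have hA : HasDerivAt (fun s : ℝ => α (s • x) v)
        (fderiv ℝ (fun y => α y v) (t • x) x) t :=
      (hdiffv.hasFDerivAt).comp_hasDerivAt t (f := fun s : ℝ => s • x) hray
    have hG := (hasDerivAt_pow (p+1) t).mul hA
    have hid : (∑ i : Fin (p+1), (-1:ℝ)^(i:ℕ) * fP' α (w i) (t, x) (v i))
        = (↑(p+1) * t ^ (p + 1 - 1)) * α (t • x) v
          + t^(p+1) * fderiv ℝ (fun y => α y v) (t • x) x := by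
      -- expand the application of fP'
      have happ : ∀ i : Fin (p+1), fP' α (w i) (t, x) (v i)
          = t^(p+1) * fderiv ℝ (fun y => α y (Fin.cons x (w i))) (t • x) (v i)
            + t^p * α (t • x) (Fin.cons (v i) (w i)) := by
        intro i
        have hfder : fderiv ℝ (fun y => α y (Fin.cons x (w i))) (t • x)
            = ∑ k, x k • fderiv ℝ (aA α k (w i)) (t • x) :=
          (R2 hUopen α hsm hmem x (w i)).fderiv
        have hexp : α (t • x) (Fin.cons (v i) (w i))
            = ∑ k, (v i) k * aA α k (w i) (t • x) :=
          HPL.expand_cons (α (t • x)) (v i) (w i)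
        rw [hfder, hexp]
        simp only [fP', ContinuousLinearMap.smul_apply, ContinuousLinearMap.coe_sum',
          Finset.sum_apply, ContinuousLinearMap.add_apply, PiLp.proj_apply, smul_eq_mul]
        rw [Finset.mul_sum, Finset.mul_sum, Finset.mul_sum, ← Finset.sum_add_distrib]
        exact Finset.sum_congr rfl (fun k _ => by ring)
      have hcl := closed_rearrange hUopen α hα_closed hmem x v
      have halt : (∑ i : Fin (p+1), (-1:ℝ)^(i:ℕ) * α (t • x) (Fin.cons (v i) (w i)))
          = (p+1 : ℝ) * α (t • x) v := by
        have := HPL.alt_sum (α (t • x)) v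
        convert this using 2
        rfl
      calc (∑ i : Fin (p+1), (-1:ℝ)^(i:ℕ) * fP' α (w i) (t, x) (v i))
          = ∑ i : Fin (p+1), (t^(p+1) * ((-1:ℝ)^(i:ℕ)
              * fderiv ℝ (fun y => α y (Fin.cons x (w i))) (t • x) (v i))
            + t^p * ((-1:ℝ)^(i:ℕ) * α (t • x) (Fin.cons (v i) (w i)))) := by
            apply Finset.sum_congr rfl
            intro i _
            rw [happ i]
            ring
        _ = t^(p+1) * (∑ i : Fin (p+1), (-1:ℝ)^(i:ℕ)
              * fderiv ℝ (fun y => α y (Fin.cons x (w i))) (t • x) (v i))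
            + t^p * (∑ i : Fin (p+1), (-1:ℝ)^(i:ℕ) * α (t • x) (Fin.cons (v i) (w i))) := by
            rw [Finset.sum_add_distrib, Finset.mul_sum, Finset.mul_sum]
        _ = t^(p+1) * fderiv ℝ (fun y => α y v) (t • x) x + t^p * ((p+1:ℝ) * α (t • x) v) := by
            rw [← hcl, halt]
        _ = (↑(p+1) * t ^ (p + 1 - 1)) * α (t • x) v
            + t^(p+1) * fderiv ℝ (fun y => α y v) (t • x) x := by
            simp only [Nat.add_sub_cancel]
            push_cast
            ring
    rw [hid]
    exact hG
  have hIntSum : IntervalIntegrable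
      (fun t : ℝ => ∑ i : Fin (p+1), (-1:ℝ)^(i:ℕ) * fP' α (w i) (t, x) (v i))
      MeasureTheory.volume 0 1 := by
    apply ContinuousOn.intervalIntegrable
    rw [Set.uIcc_of_le zero_le_one]
    exact continuousOn_finset_sum _ (fun i _ =>
      continuousOn_const.mul ((hcont' i).clm_apply continuousOn_const))
  rw [intervalIntegral.integral_eq_sub_of_hasDerivAt hderiv hIntSum]
  simp

end Main

end HPL

theorem homogeneous_poincare_lemma {n p : ℕ}
    (U : Set (En n)) (hUopen : IsOpen U) (hUstar : StarConvex ℝ (0 : En n) U)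
    -- a linear action of ℝˣ on ℝⁿ leaving U invariant
    (h : ℝˣ → En n →L[ℝ] En n)
    (h_one : h 1 = ContinuousLinearMap.id ℝ (En n))
    (h_mul : ∀ z w : ℝˣ, h (z * w) = (h z).comp (h w))
    (hUinv : ∀ z : ℝˣ, ∀ x ∈ U, h z x ∈ U)
    -- a smooth (p+1)-form on U
    (α : En n → AlternatingMap ℝ (En n) ℝ (Fin (p + 1)))
    (hα_smooth : ∀ v : Fin (p + 1) → En n, ContDiffOn ℝ (⊤ : ℕ∞) (fun y => α y v) U)
    -- closed on U
    (hα_closed : ∀ x ∈ U, ∀ v : Fin (p + 2) → En n, extD (fun y w => α y w) x v = 0)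
    -- 1-homogeneous: h_z^* α = z • α on U
    (hα_hom : ∀ z : ℝˣ, ∀ x ∈ U, ∀ v : Fin (p + 1) → En n,
      α (h z x) (fun i => h z (v i)) = (z : ℝ) * α x v) :
    -- there is a smooth primitive β on U which is itself 1-homogeneous
    ∃ β : En n → AlternatingMap ℝ (En n) ℝ (Fin p),
      (∀ v : Fin p → En n, ContDiffOn ℝ (⊤ : ℕ∞) (fun y => β y v) U) ∧
      (∀ x ∈ U, ∀ v : Fin (p + 1) → En n, extD (fun y w => β y w) x v = α x v) ∧
      (∀ z : ℝˣ, ∀ x ∈ U, ∀ v : Fin p → En n,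
        β (h z x) (fun i => h z (v i)) = (z : ℝ) * β x v) := by
  refine ⟨HPL.beta hUopen hUstar α hα_smooth, ?_, ?_, ?_⟩
  · intro v
    exact HPL.beta_smooth hUopen hUstar α hα_smooth v
  · intro x hx v
    exact HPL.beta_primitive hUopen hUstar α hα_smooth hα_closed hx v
  · intro z x hx v
    exact HPL.beta_hom hUopen hUstar α hα_smooth h hUinv hα_hom z hx v
end

section
/- Let (P_J, Π) be the Poissonization of a Jacobi manifold, with cotangent bundle T^*P_J carrying the phase-lifted ℝ^×-action T^*h, and let X be a Poisson spray on T^*P_J of the local form X = Σ_{ij} (1/t)Λ_{ij}(x)ξ_j ∂/∂x_i + E_j(x)ξ_j ∂/∂t − E_i(x)ξ_t ∂/∂x_i + f_{ij} ξ_i ξ_j ∂/∂ξ_j. If the coefficient functions satisfy f_{ij}(x, zt) = (1/z)f_{ij}(x,t) for i ≠ t and f_{tj}(x, zt) = f_{tj}(x,t) for all z ∈ ℝ^×, then X is 0-homogeneous, i.e. (T^*h_z)_*X = X, and consequently its flow φ^s_X commutes with the lifted action: φ^s_X ∘ T^*h_z = T^*h_z ∘ φ^s_X. -/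
/-! Homogeneity of a Poisson spray on the Poissonization of a Jacobi manifold:
if the free coefficients satisfy the stated homogeneity, the spray is 0-homogeneous
and its flow commutes with the phase-lifted ℝˣ-action. -/

/-- Points of T^*P_J in coordinates: (x, t, ξ_x, ξ_t). -/
abbrev CotPJ (n : ℕ) := (Fin n → ℝ) × ℝ × (Fin n → ℝ) × ℝ

/-- The phase-lifted ℝˣ-action: (x, t, ξ_x, ξ_t) ↦ (x, z·t, z·ξ_x, ξ_t). -/
def phaseLift (n : ℕ) (z : ℝˣ) (m : CotPJ n) : CotPJ n :=
  (m.1, (z : ℝ) * m.2.1, (z : ℝ) • m.2.2.1, m.2.2.2)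

/-- The Poisson spray
X = Σ (1/t)Λ_{ij}(x)ξ_j ∂/∂x_i + E_j(x)ξ_j ∂/∂t − E_i(x)ξ_t ∂/∂x_i + f_{ij}ξ_iξ_j ∂/∂ξ_j
(the index i of the optional coefficients f_{ij} runs over the spatial indices and t). -/
noncomputable def spray {n : ℕ}
    (Λ : (Fin n → ℝ) → Fin n → Fin n → ℝ) (Ev : (Fin n → ℝ) → Fin n → ℝ)
    (f : (Fin n → ℝ) → ℝ → Fin n → Fin n → ℝ)   -- f_{ij}, i,j spatial
    (fT : (Fin n → ℝ) → ℝ → Fin n → ℝ)          -- f_{tj}, j spatial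
    (fiT : (Fin n → ℝ) → ℝ → Fin n → ℝ)         -- f_{it}, i spatial
    (fTT : (Fin n → ℝ) → ℝ → ℝ)                 -- f_{tt}
    (m : CotPJ n) : CotPJ n :=
  let x := m.1; let t := m.2.1; let ξ := m.2.2.1; let ξt := m.2.2.2
  (fun i => (1 / t) * ∑ j, Λ x i j * ξ j - Ev x i * ξt,
   ∑ j, Ev x j * ξ j,
   fun j => (∑ i, f x t i j * ξ i) * ξ j + fT x t j * ξt * ξ j,
   (∑ i, fiT x t i * ξ i) * ξt + fTT x t * ξt * ξt)

/-- The phase lift as a continuous linear map (for a fixed `z`). -/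
noncomputable def phaseLiftL (n : ℕ) (z : ℝˣ) : CotPJ n →L[ℝ] CotPJ n :=
  (ContinuousLinearMap.id ℝ (Fin n → ℝ)).prodMap
    (((z : ℝ) • ContinuousLinearMap.id ℝ ℝ).prodMap
      (((z : ℝ) • ContinuousLinearMap.id ℝ (Fin n → ℝ)).prodMap (ContinuousLinearMap.id ℝ ℝ)))

lemma phaseLiftL_apply (n : ℕ) (z : ℝˣ) (m : CotPJ n) :
    phaseLiftL n z m = phaseLift n z m := by
  obtain ⟨x, t, ξ, ξt⟩ := m
  simp [phaseLiftL, phaseLift, smul_eq_mul]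

/-- Part (1) as a standalone lemma: the spray is 0-homogeneous. -/
lemma spray_phaseLift {n : ℕ}
    (Λ : (Fin n → ℝ) → Fin n → Fin n → ℝ) (Ev : (Fin n → ℝ) → Fin n → ℝ)
    (f : (Fin n → ℝ) → ℝ → Fin n → Fin n → ℝ) (fT : (Fin n → ℝ) → ℝ → Fin n → ℝ)
    (fiT : (Fin n → ℝ) → ℝ → Fin n → ℝ) (fTT : (Fin n → ℝ) → ℝ → ℝ)
    (hfhom : ∀ (z : ℝˣ) (x : Fin n → ℝ) (t : ℝ), t ≠ 0 → ∀ i j,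
      f x ((z : ℝ) * t) i j = (z : ℝ)⁻¹ * f x t i j)
    (hfiThom : ∀ (z : ℝˣ) (x : Fin n → ℝ) (t : ℝ), t ≠ 0 → ∀ i,
      fiT x ((z : ℝ) * t) i = (z : ℝ)⁻¹ * fiT x t i)
    (hfThom : ∀ (z : ℝˣ) (x : Fin n → ℝ) (t : ℝ), t ≠ 0 → ∀ j,
      fT x ((z : ℝ) * t) j = fT x t j)
    (hfTThom : ∀ (z : ℝˣ) (x : Fin n → ℝ) (t : ℝ), t ≠ 0 →
      fTT x ((z : ℝ) * t) = fTT x t)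
    (z : ℝˣ) (m : CotPJ n) (hm : m.2.1 ≠ 0) :
      spray Λ Ev f fT fiT fTT (phaseLift n z m)
        = phaseLift n z (spray Λ Ev f fT fiT fTT m) := by
  obtain ⟨x, t, ξ, ξt⟩ := m
  simp only [ne_eq] at hm
  have hz : (z : ℝ) ≠ 0 := z.ne_zero
  have h1 : ∀ g : Fin n → ℝ, ∑ j, g j * ((z:ℝ) * ξ j) = (z:ℝ) * ∑ j, g j * ξ j := by
    intro g; rw [Finset.mul_sum]; exact Finset.sum_congr rfl fun j _ => by ring
  have h2 : ∀ g : Fin n → ℝ, ∑ i, ((z:ℝ)⁻¹ * g i) * ((z:ℝ) * ξ i) = ∑ i, g i * ξ i := by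
    intro g; exact Finset.sum_congr rfl fun i _ => by field_simp
  refine Prod.ext ?_ (Prod.ext ?_ (Prod.ext ?_ ?_))
  · funext i
    show (1 / ((z:ℝ) * t)) * (∑ j, Λ x i j * ((z:ℝ) • ξ) j) - Ev x i * ξt
        = (1 / t) * (∑ j, Λ x i j * ξ j) - Ev x i * ξt
    simp only [Pi.smul_apply, smul_eq_mul, h1]
    field_simp
  · show ∑ j, Ev x j * ((z:ℝ) • ξ) j = (z:ℝ) * ∑ j, Ev x j * ξ j
    simp only [Pi.smul_apply, smul_eq_mul, h1]
  · funext j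
    show (∑ i, f x ((z:ℝ)*t) i j * ((z:ℝ) • ξ) i) * ((z:ℝ) • ξ) j
          + fT x ((z:ℝ)*t) j * ξt * ((z:ℝ) • ξ) j
        = (z:ℝ) * ((∑ i, f x t i j * ξ i) * ξ j + fT x t j * ξt * ξ j)
    simp only [Pi.smul_apply, smul_eq_mul, hfhom z x t hm, hfThom z x t hm, h2]
    ring
  · show (∑ i, fiT x ((z:ℝ)*t) i * ((z:ℝ) • ξ) i) * ξt + fTT x ((z:ℝ)*t) * ξt * ξt
        = (∑ i, fiT x t i * ξ i) * ξt + fTT x t * ξt * ξt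
    simp only [Pi.smul_apply, smul_eq_mul, hfiThom z x t hm, hfTThom z x t hm, h2]

/-- The spray is `C¹` at every point with `t ≠ 0`. -/
lemma sprayContDiffAt {n : ℕ}
    (Λ : (Fin n → ℝ) → Fin n → Fin n → ℝ) (Ev : (Fin n → ℝ) → Fin n → ℝ)
    (f : (Fin n → ℝ) → ℝ → Fin n → Fin n → ℝ) (fT : (Fin n → ℝ) → ℝ → Fin n → ℝ)
    (fiT : (Fin n → ℝ) → ℝ → Fin n → ℝ) (fTT : (Fin n → ℝ) → ℝ → ℝ)
    (hΛ : ∀ i j, ContDiff ℝ (⊤ : ℕ∞) (fun x => Λ x i j))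
    (hE : ∀ i, ContDiff ℝ (⊤ : ℕ∞) (fun x => Ev x i))
    (hf : ∀ i j, ContDiffOn ℝ (⊤ : ℕ∞) (fun q : (Fin n → ℝ) × ℝ => f q.1 q.2 i j)
      {q | q.2 ≠ 0})
    (hfT : ∀ j, ContDiffOn ℝ (⊤ : ℕ∞) (fun q : (Fin n → ℝ) × ℝ => fT q.1 q.2 j)
      {q | q.2 ≠ 0})
    (hfiT : ∀ i, ContDiffOn ℝ (⊤ : ℕ∞) (fun q : (Fin n → ℝ) × ℝ => fiT q.1 q.2 i)
      {q | q.2 ≠ 0})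
    (hfTT : ContDiffOn ℝ (⊤ : ℕ∞) (fun q : (Fin n → ℝ) × ℝ => fTT q.1 q.2) {q | q.2 ≠ 0})
    (p : CotPJ n) (hp : p.2.1 ≠ 0) :
    ContDiffAt ℝ 1 (spray Λ Ev f fT fiT fTT) p := by
  have hopen : IsOpen {q : (Fin n → ℝ) × ℝ | q.2 ≠ 0} :=
    isOpen_compl_iff.mpr (isClosed_eq continuous_snd continuous_const)
  have hproj : ContDiff ℝ (⊤ : ℕ∞) (fun q : CotPJ n => (q.1, q.2.1)) :=
    contDiff_fst.prodMk (contDiff_fst.comp contDiff_snd)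
  have hmem : (p.1, p.2.1) ∈ {q : (Fin n → ℝ) × ℝ | q.2 ≠ 0} := hp
  have key : ∀ g : (Fin n → ℝ) × ℝ → ℝ,
      ContDiffOn ℝ (⊤ : ℕ∞) g {q | q.2 ≠ 0} →
      ContDiffAt ℝ 1 (fun q : CotPJ n => g (q.1, q.2.1)) p := by
    intro g hg
    exact (((hg.contDiffAt (hopen.mem_nhds hmem)).comp p hproj.contDiffAt).of_le
      (by exact_mod_cast le_top))
  have hx : ∀ g : (Fin n → ℝ) → ℝ, ContDiff ℝ (⊤ : ℕ∞) g →
      ContDiffAt ℝ 1 (fun q : CotPJ n => g q.1) p := by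
    intro g hg
    exact ((hg.comp contDiff_fst).contDiffAt.of_le (by exact_mod_cast le_top))
  have hξ : ∀ j, ContDiffAt ℝ 1 (fun q : CotPJ n => q.2.2.1 j) p :=
    fun j => (((contDiff_apply ℝ ℝ j).comp
      (contDiff_fst.comp (contDiff_snd.comp contDiff_snd))).contDiffAt)
  have hξt : ContDiffAt ℝ 1 (fun q : CotPJ n => q.2.2.2) p :=
    (contDiff_snd.comp (contDiff_snd.comp contDiff_snd)).contDiffAt
  have ht : ContDiffAt ℝ 1 (fun q : CotPJ n => q.2.1) p :=
    (contDiff_fst.comp contDiff_snd).contDiffAt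
  have hinv : ContDiffAt ℝ 1 (fun q : CotPJ n => 1 / q.2.1) p := by
    exact contDiffAt_const.div ht hp
  have hA : ContDiffAt ℝ 1 (fun q : CotPJ n =>
      fun i => (1 / q.2.1) * ∑ j, Λ q.1 i j * q.2.2.1 j - Ev q.1 i * q.2.2.2) p := by
    rw [contDiffAt_pi]
    intro i
    exact (hinv.mul (ContDiffAt.sum fun j _ => (hx _ (hΛ i j)).mul (hξ j))).sub
      ((hx _ (hE i)).mul hξt)
  have hB : ContDiffAt ℝ 1 (fun q : CotPJ n => ∑ j, Ev q.1 j * q.2.2.1 j) p :=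
    ContDiffAt.sum fun j _ => (hx _ (hE j)).mul (hξ j)
  have hC : ContDiffAt ℝ 1 (fun q : CotPJ n =>
      fun j => (∑ i, f q.1 q.2.1 i j * q.2.2.1 i) * q.2.2.1 j
        + fT q.1 q.2.1 j * q.2.2.2 * q.2.2.1 j) p := by
    rw [contDiffAt_pi]
    intro j
    exact ((ContDiffAt.sum fun i _ => (key _ (hf i j)).mul (hξ i)).mul (hξ j)).add
      (((key _ (hfT j)).mul hξt).mul (hξ j))
  have hD : ContDiffAt ℝ 1 (fun q : CotPJ n =>
      (∑ i, fiT q.1 q.2.1 i * q.2.2.1 i) * q.2.2.2 + fTT q.1 q.2.1 * q.2.2.2 * q.2.2.2) p :=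
    ((ContDiffAt.sum fun i _ => (key _ (hfiT i)).mul (hξ i)).mul hξt).add
      (((key _ hfTT).mul hξt).mul hξt)
  exact hA.prodMk (hB.prodMk (hC.prodMk hD))

theorem homogeneous_spray_and_flow_commute {n : ℕ}
    (Λ : (Fin n → ℝ) → Fin n → Fin n → ℝ) (Ev : (Fin n → ℝ) → Fin n → ℝ)
    (f : (Fin n → ℝ) → ℝ → Fin n → Fin n → ℝ) (fT : (Fin n → ℝ) → ℝ → Fin n → ℝ)
    (fiT : (Fin n → ℝ) → ℝ → Fin n → ℝ) (fTT : (Fin n → ℝ) → ℝ → ℝ)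
    -- smoothness of the data (on the region t ≠ 0 for the coefficients)
    (hΛ : ∀ i j, ContDiff ℝ (⊤ : ℕ∞) (fun x => Λ x i j))
    (hE : ∀ i, ContDiff ℝ (⊤ : ℕ∞) (fun x => Ev x i))
    (hf : ∀ i j, ContDiffOn ℝ (⊤ : ℕ∞) (fun q : (Fin n → ℝ) × ℝ => f q.1 q.2 i j)
      {q | q.2 ≠ 0})
    (hfT : ∀ j, ContDiffOn ℝ (⊤ : ℕ∞) (fun q : (Fin n → ℝ) × ℝ => fT q.1 q.2 j)
      {q | q.2 ≠ 0})
    (hfiT : ∀ i, ContDiffOn ℝ (⊤ : ℕ∞) (fun q : (Fin n → ℝ) × ℝ => fiT q.1 q.2 i)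
      {q | q.2 ≠ 0})
    (hfTT : ContDiffOn ℝ (⊤ : ℕ∞) (fun q : (Fin n → ℝ) × ℝ => fTT q.1 q.2) {q | q.2 ≠ 0})
    -- homogeneity of the free coefficients:
    -- f_{ij}(x, z·t) = (1/z)·f_{ij}(x,t) for i ≠ t, and f_{tj}(x, z·t) = f_{tj}(x,t)
    (hfhom : ∀ (z : ℝˣ) (x : Fin n → ℝ) (t : ℝ), t ≠ 0 → ∀ i j,
      f x ((z : ℝ) * t) i j = (z : ℝ)⁻¹ * f x t i j)
    (hfiThom : ∀ (z : ℝˣ) (x : Fin n → ℝ) (t : ℝ), t ≠ 0 → ∀ i,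
      fiT x ((z : ℝ) * t) i = (z : ℝ)⁻¹ * fiT x t i)
    (hfThom : ∀ (z : ℝˣ) (x : Fin n → ℝ) (t : ℝ), t ≠ 0 → ∀ j,
      fT x ((z : ℝ) * t) j = fT x t j)
    (hfTThom : ∀ (z : ℝˣ) (x : Fin n → ℝ) (t : ℝ), t ≠ 0 →
      fTT x ((z : ℝ) * t) = fTT x t) :
    -- (1) the spray is 0-homogeneous: (T^*h_z)_* X = X
    (∀ (z : ℝˣ) (m : CotPJ n), m.2.1 ≠ 0 →
      spray Λ Ev f fT fiT fTT (phaseLift n z m)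
        = phaseLift n z (spray Λ Ev f fT fiT fTT m)) ∧
    -- (2) consequently any flow of the spray commutes with the lifted action
    (∀ φ : ℝ → CotPJ n → CotPJ n,
      (∀ m : CotPJ n, m.2.1 ≠ 0 → φ 0 m = m) →
      (∀ (s : ℝ) (m : CotPJ n), m.2.1 ≠ 0 → (φ s m).2.1 ≠ 0) →
      (∀ (s : ℝ) (m : CotPJ n), m.2.1 ≠ 0 →
        HasDerivAt (fun r => φ r m) (spray Λ Ev f fT fiT fTT (φ s m)) s) →
      ∀ (s : ℝ) (z : ℝˣ) (m : CotPJ n), m.2.1 ≠ 0 →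
        φ s (phaseLift n z m) = phaseLift n z (φ s m)) := by
  have hom := spray_phaseLift Λ Ev f fT fiT fTT hfhom hfiThom hfThom hfTThom
  refine ⟨hom, ?_⟩
  intro φ h0 hne hder s z m hm
  set X := spray Λ Ev f fT fiT fTT with hX
  have hzm : (phaseLift n z m).2.1 ≠ 0 := mul_ne_zero z.ne_zero hm
  set c : ℝ → CotPJ n := fun r => φ r (phaseLift n z m) with hcdef
  set d : ℝ → CotPJ n := fun r => phaseLift n z (φ r m) with hddef
  have hc' : ∀ r, HasDerivAt c (X (c r)) r := fun r => hder r _ hzm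
  have hcne : ∀ r, (c r).2.1 ≠ 0 := fun r => hne r _ hzm
  have hdne : ∀ r, (d r).2.1 ≠ 0 := fun r => mul_ne_zero z.ne_zero (hne r m hm)
  have hd' : ∀ r, HasDerivAt d (X (d r)) r := by
    intro r
    have h := hder r m hm
    have h2 := (phaseLiftL n z).hasFDerivAt.comp_hasDerivAt r h
    have e1 : (⇑(phaseLiftL n z) ∘ fun r => φ r m) = d :=
      funext fun r => phaseLiftL_apply n z (φ r m)
    have e2 : phaseLiftL n z (X (φ r m)) = X (d r) := by
      rw [phaseLiftL_apply, hddef]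
      exact (hom z (φ r m) (hne r m hm)).symm
    rw [e1, e2] at h2
    exact h2
  have hcC : Continuous c := continuous_iff_continuousAt.mpr fun r => (hc' r).continuousAt
  have hdC : Continuous d := continuous_iff_continuousAt.mpr fun r => (hd' r).continuousAt
  have hSclosed : IsClosed {r : ℝ | c r = d r} := isClosed_eq hcC hdC
  have hSopen : IsOpen {r : ℝ | c r = d r} := by
    rw [isOpen_iff_mem_nhds]
    intro r₀ hr₀
    obtain ⟨K, u, hu, hlip⟩ :=
      (sprayContDiffAt Λ Ev f fT fiT fTT hΛ hE hf hfT hfiT hfTT (c r₀)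
        (hcne r₀)).exists_lipschitzOnWith
    have hud : u ∈ nhds (d r₀) := by
      have : c r₀ = d r₀ := hr₀
      rwa [this] at hu
    have hev : c =ᶠ[nhds r₀] d := by
      refine ODE_solution_unique_of_eventually (v := fun _ => X) (s := fun _ => u)
        (Filter.Eventually.of_forall fun _ => hlip) ?_ ?_ hr₀
      · exact ((hcC.continuousAt (x := r₀)).eventually_mem hu).mono fun t htu => ⟨hc' t, htu⟩
      · exact ((hdC.continuousAt (x := r₀)).eventually_mem hud).mono fun t htu => ⟨hd' t, htu⟩
    exact hev
  have h0mem : (0 : ℝ) ∈ {r : ℝ | c r = d r} := by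
    show φ 0 (phaseLift n z m) = phaseLift n z (φ 0 m)
    rw [h0 _ hzm, h0 m hm]
  have huniv : {r : ℝ | c r = d r} = Set.univ :=
    IsClopen.eq_univ ⟨hSclosed, hSopen⟩ ⟨0, h0mem⟩
  exact Set.eq_univ_iff_forall.mp huniv s
end
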